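/- arXiv:1911.03148 — 5 statements merged into one kernel-verified Lean document; each statement's English description precedes it below -/
import Mathlib

section
/- Let G(t,x) = 1/2 if t > 0 and |x| < t, and G(t,x) = 0 otherwise (t ∈ ℝ, x ∈ ℝ). Fix T > 0. Then there exists a constant C(T) > 0 such that for all t, t̄ ∈ [0,T] and all x, x̄ ∈ ℝ: ∫₀^T ∫_ℝ |G(t−s, x−y) − G(t̄−s, x̄−y)| dy ds = 2 ∫₀^T ∫_ℝ |G(t−s, x−y) − G(t̄−s, x̄−y)|² dy ds ≤ C(T)·(|t−t̄| + |x−x̄|). -/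
open MeasureTheory

/-- The fundamental solution of the wave operator in spatial dimension 1,
extended by `0` for `t ≤ 0`. -/
noncomputable def G1 (t x : ℝ) : ℝ := if 0 < t ∧ |x| < t then 1 / 2 else 0

lemma G1_eq_indicator (r c y : ℝ) :
    G1 r (c - y) = Set.indicator (Set.Ioo (c - r) (c + r)) (fun _ => (1 : ℝ) / 2) y := by
  have hiff : (0 < r ∧ |c - y| < r) ↔ y ∈ Set.Ioo (c - r) (c + r) := by
    rw [Set.mem_Ioo, abs_lt]
    constructor
    · rintro ⟨_, h1, h2⟩; constructor <;> linarith
    · rintro ⟨h1, h2⟩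
      refine ⟨by linarith, by linarith, by linarith⟩
  unfold G1
  by_cases hy : y ∈ Set.Ioo (c - r) (c + r)
  · rw [if_pos (hiff.2 hy), Set.indicator_of_mem hy]
  · rw [if_neg (fun h => hy (hiff.1 h)), Set.indicator_of_notMem hy]

lemma abs_ind_le (a b c d y : ℝ) :
    |Set.indicator (Set.Ioo a b) (fun _ => (1 : ℝ) / 2) y -
      Set.indicator (Set.Ioo c d) (fun _ => (1 : ℝ) / 2) y| ≤
    1 / 2 * (Set.indicator (Set.uIcc a c) (fun _ => (1 : ℝ)) y +
      Set.indicator (Set.uIcc b d) (fun _ => (1 : ℝ)) y) := by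
  have h1 : ∀ s : Set ℝ, (0 : ℝ) ≤ Set.indicator s (fun _ => (1 : ℝ)) y :=
    fun s => Set.indicator_nonneg (fun _ _ => zero_le_one) y
  by_cases hI : y ∈ Set.Ioo a b <;> by_cases hJ : y ∈ Set.Ioo c d
  · rw [Set.indicator_of_mem hI, Set.indicator_of_mem hJ]
    simp only [sub_self, abs_zero]
    have := h1 (Set.uIcc a c); have := h1 (Set.uIcc b d); linarith
  · rw [Set.indicator_of_mem hI, Set.indicator_of_notMem hJ]
    have key : y ∈ Set.uIcc a c ∨ y ∈ Set.uIcc b d := by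
      rw [Set.mem_Ioo] at hI hJ; push_neg at hJ
      rcases le_or_gt y c with h | h
      · exact Or.inl (Set.mem_uIcc.2 (Or.inl ⟨hI.1.le, h⟩))
      · exact Or.inr (Set.mem_uIcc.2 (Or.inr ⟨hJ h, hI.2.le⟩))
    rcases key with h | h
    · rw [Set.indicator_of_mem h]
      have := h1 (Set.uIcc b d)
      rw [sub_zero, abs_of_nonneg (by norm_num : (0:ℝ) ≤ 1/2)]; linarith
    · rw [Set.indicator_of_mem h]
      have := h1 (Set.uIcc a c)
      rw [sub_zero, abs_of_nonneg (by norm_num : (0:ℝ) ≤ 1/2)]; linarith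
  · rw [Set.indicator_of_notMem hI, Set.indicator_of_mem hJ]
    have key : y ∈ Set.uIcc a c ∨ y ∈ Set.uIcc b d := by
      rw [Set.mem_Ioo] at hI hJ; push_neg at hI
      rcases le_or_gt y a with h | h
      · exact Or.inl (Set.mem_uIcc.2 (Or.inr ⟨hJ.1.le, h⟩))
      · exact Or.inr (Set.mem_uIcc.2 (Or.inl ⟨hI h, hJ.2.le⟩))
    rcases key with h | h
    · rw [Set.indicator_of_mem h]
      have := h1 (Set.uIcc b d)
      rw [zero_sub, abs_neg, abs_of_nonneg (by norm_num : (0:ℝ) ≤ 1/2)]; linarith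
    · rw [Set.indicator_of_mem h]
      have := h1 (Set.uIcc a c)
      rw [zero_sub, abs_neg, abs_of_nonneg (by norm_num : (0:ℝ) ≤ 1/2)]; linarith
  · rw [Set.indicator_of_notMem hI, Set.indicator_of_notMem hJ]
    simp only [sub_self, abs_zero]
    have := h1 (Set.uIcc a c); have := h1 (Set.uIcc b d); linarith

lemma ind_integrable (s : Set ℝ) (hs : MeasurableSet s) (hfin : volume s ≠ ⊤) (e : ℝ) :
    Integrable (Set.indicator s (fun _ => e)) := by
  rw [integrable_indicator_iff hs]
  exact integrableOn_const hfin

/-- `L¹`/`L²` estimates for space-time increments of the 1-d wave kernel. -/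
theorem stmt2 (T : ℝ) (hT : 0 < T) :
    ∃ C > 0, ∀ t ∈ Set.Icc (0 : ℝ) T, ∀ t' ∈ Set.Icc (0 : ℝ) T, ∀ x x' : ℝ,
      (∫ s in (0 : ℝ)..T, ∫ y : ℝ, |G1 (t - s) (x - y) - G1 (t' - s) (x' - y)|)
          = 2 * ∫ s in (0 : ℝ)..T, ∫ y : ℝ, |G1 (t - s) (x - y) - G1 (t' - s) (x' - y)| ^ 2
        ∧ (∫ s in (0 : ℝ)..T, ∫ y : ℝ, |G1 (t - s) (x - y) - G1 (t' - s) (x' - y)|)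
          ≤ C * (|t - t'| + |x - x'|) := by
  refine ⟨T, hT, fun t ht t' ht' x x' => ?_⟩
  constructor
  · have hpt : ∀ u v u' v' : ℝ, 2 * |G1 u v - G1 u' v'| ^ 2 = |G1 u v - G1 u' v'| := by
      intro u v u' v'; unfold G1; split_ifs <;> norm_num <;> rw [abs_of_pos] <;> norm_num
    have h2 : ∀ s : ℝ, (∫ y : ℝ, |G1 (t - s) (x - y) - G1 (t' - s) (x' - y)|)
        = ∫ y : ℝ, 2 * |G1 (t - s) (x - y) - G1 (t' - s) (x' - y)| ^ 2 := by
      intro s; simp_rw [hpt]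
    simp_rw [h2, MeasureTheory.integral_const_mul _ _, intervalIntegral.integral_const_mul]
  · have hinner : ∀ s : ℝ, (∫ y : ℝ, |G1 (t - s) (x - y) - G1 (t' - s) (x' - y)|)
        ≤ |t - t'| + |x - x'| := by
      intro s
      set a := x - (t - s) with ha
      set b := x + (t - s) with hb
      set c := x' - (t' - s) with hc
      set d := x' + (t' - s) with hd
      have hrw : ∀ y : ℝ, |G1 (t - s) (x - y) - G1 (t' - s) (x' - y)| =
          |Set.indicator (Set.Ioo a b) (fun _ => (1 : ℝ) / 2) y -
           Set.indicator (Set.Ioo c d) (fun _ => (1 : ℝ) / 2) y| := by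
        intro y; rw [G1_eq_indicator, G1_eq_indicator]
      simp_rw [hrw]
      have hIf := ind_integrable (Set.Ioo a b) measurableSet_Ioo
        (by rw [Real.volume_Ioo]; exact ENNReal.ofReal_ne_top) ((1:ℝ)/2)
      have hJf := ind_integrable (Set.Ioo c d) measurableSet_Ioo
        (by rw [Real.volume_Ioo]; exact ENNReal.ofReal_ne_top) ((1:ℝ)/2)
      have hUac := ind_integrable (Set.uIcc a c) measurableSet_uIcc
        (by rw [Real.volume_interval]; exact ENNReal.ofReal_ne_top) (1:ℝ)
      have hUbd := ind_integrable (Set.uIcc b d) measurableSet_uIcc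
        (by rw [Real.volume_interval]; exact ENNReal.ofReal_ne_top) (1:ℝ)
      have hInt : Integrable (fun y => |Set.indicator (Set.Ioo a b) (fun _ => (1 : ℝ) / 2) y -
          Set.indicator (Set.Ioo c d) (fun _ => (1 : ℝ) / 2) y|) := (hIf.sub hJf).abs
      have hBnd : Integrable (fun y => 1 / 2 * (Set.indicator (Set.uIcc a c) (fun _ => (1 : ℝ)) y +
          Set.indicator (Set.uIcc b d) (fun _ => (1 : ℝ)) y)) := (hUac.add hUbd).const_mul _
      have hle := MeasureTheory.integral_mono hInt hBnd (fun y => abs_ind_le a b c d y)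
      have hval : (∫ y : ℝ, 1 / 2 * (Set.indicator (Set.uIcc a c) (fun _ => (1 : ℝ)) y +
          Set.indicator (Set.uIcc b d) (fun _ => (1 : ℝ)) y)) = 1 / 2 * (|c - a| + |d - b|) := by
        rw [MeasureTheory.integral_const_mul _ _, MeasureTheory.integral_add hUac hUbd,
          MeasureTheory.integral_indicator_const _ measurableSet_uIcc,
          MeasureTheory.integral_indicator_const _ measurableSet_uIcc,
          measureReal_def, measureReal_def, Real.volume_interval, Real.volume_interval,
          ENNReal.toReal_ofReal (abs_nonneg _), ENNReal.toReal_ofReal (abs_nonneg _)]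
        simp
      rw [hval] at hle
      have hca : |c - a| ≤ |x - x'| + |t - t'| := by
        have h1 : c - a = (x' - x) + (t - t') := by rw [hc, ha]; ring
        rw [h1]
        calc |(x' - x) + (t - t')| ≤ |x' - x| + |t - t'| := abs_add_le _ _
          _ = |x - x'| + |t - t'| := by rw [abs_sub_comm]
      have hdb : |d - b| ≤ |x - x'| + |t - t'| := by
        have h1 : d - b = (x' - x) + (t' - t) := by rw [hd, hb]; ring
        rw [h1]
        calc |(x' - x) + (t' - t)| ≤ |x' - x| + |t' - t| := abs_add_le _ _
          _ = |x - x'| + |t - t'| := by rw [abs_sub_comm, abs_sub_comm t' t]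
      linarith
    have hnorm : ∀ s ∈ Set.uIoc (0 : ℝ) T,
        ‖∫ y : ℝ, |G1 (t - s) (x - y) - G1 (t' - s) (x' - y)|‖ ≤ |t - t'| + |x - x'| := by
      intro s _
      rw [Real.norm_eq_abs, abs_of_nonneg (integral_nonneg fun y => abs_nonneg _)]
      exact hinner s
    have hmain := intervalIntegral.norm_integral_le_of_norm_le_const hnorm
    calc (∫ s in (0 : ℝ)..T, ∫ y : ℝ, |G1 (t - s) (x - y) - G1 (t' - s) (x' - y)|)
        ≤ ‖∫ s in (0 : ℝ)..T, ∫ y : ℝ, |G1 (t - s) (x - y) - G1 (t' - s) (x' - y)|‖ :=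
          le_abs_self _
      _ ≤ (|t - t'| + |x - x'|) * |T - 0| := hmain
      _ = T * (|t - t'| + |x - x'|) := by rw [sub_zero, abs_of_pos hT]; ring
end

section
/- Let d ∈ {2,3}, κ > d − 2, T > 0, and let ν > 0 satisfy ν < min(2, κ − d + 2). Then there exists a constant C = C(d,κ,T,ν) > 0 such that for every t ∈ (0,T]: ∫_{ℝ^d} (sin(t|ζ|)/|ζ|)² · (1 + |ζ|²)^{−κ/2} dζ ≤ C · t^ν. -/
open MeasureTheory Set Metric Real Module

lemma pw_bound {ν : ℝ} (hν0 : 0 < ν) (hν2 : ν < 2) {t r : ℝ} (ht : 0 < t) (hr : 0 ≤ r) :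
    (Real.sin (t * r) / r) ^ 2 ≤ t ^ ν * r ^ (ν - 2) := by
  rcases eq_or_lt_of_le hr with h0 | hr
  · rw [← h0]
    simp [Real.zero_rpow (by linarith : ν - 2 ≠ 0)]
  have key : (Real.sin (t * r) / r) ^ 2 ≤ min (t ^ 2) (1 / r ^ 2) := by
    rw [div_pow]
    refine le_min ?_ ?_
    · rw [div_le_iff₀ (by positivity)]
      calc Real.sin (t * r) ^ 2 ≤ (t * r) ^ 2 := Real.sin_sq_le_sq
        _ = t ^ 2 * r ^ 2 := by ring
    · rw [div_le_div_iff₀ (by positivity) (by positivity), one_mul]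
      nlinarith [Real.sin_sq_le_one (t * r), sq_nonneg r]
  refine key.trans ?_
  set m := min (t ^ 2) (1 / r ^ 2) with hm
  have hm0 : 0 < m := lt_min (by positivity) (by positivity)
  have e1 : m = m ^ (ν / 2) * m ^ (1 - ν / 2) := by
    rw [← Real.rpow_add hm0]
    norm_num
  rw [e1]
  have e2 : (t ^ 2 : ℝ) ^ (ν / 2) = t ^ ν := by
    rw [← Real.rpow_natCast t 2, ← Real.rpow_mul ht.le]
    congr 1
    ring
  have e3 : ((1 / r ^ 2 : ℝ)) ^ (1 - ν / 2) = r ^ (ν - 2) := by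
    rw [one_div, ← Real.rpow_natCast r 2, ← Real.rpow_neg hr.le, ← Real.rpow_mul hr.le]
    congr 1
    push_cast
    ring
  rw [← e2, ← e3]
  have b1 : m ^ (ν / 2) ≤ (t ^ 2 : ℝ) ^ (ν / 2) :=
    Real.rpow_le_rpow hm0.le (min_le_left _ _) (by linarith)
  have b2 : m ^ (1 - ν / 2) ≤ ((1 / r ^ 2 : ℝ)) ^ (1 - ν / 2) :=
    Real.rpow_le_rpow hm0.le (min_le_right _ _) (by linarith)
  exact mul_le_mul b1 b2 (Real.rpow_nonneg hm0.le _) (by positivity)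

lemma integrable_comp_norm {d : ℕ} (hd : 0 < d) (h : ℝ → ℝ)
    (hint : IntegrableOn (fun r : ℝ => r ^ (d - 1) * h r) (Ioi 0) volume) :
    Integrable (fun x : EuclideanSpace ℝ (Fin d) => h ‖x‖) := by
  haveI : Nonempty (Fin d) := ⟨⟨0, hd⟩⟩
  haveI : Nontrivial (EuclideanSpace ℝ (Fin d)) :=
    nontrivial_of_ne (EuclideanSpace.single ⟨0, hd⟩ (1:ℝ)) 0 (by
      intro hc
      have := congrArg (fun v : EuclideanSpace ℝ (Fin d) => v ⟨0, hd⟩) hc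
      simp [EuclideanSpace.single_apply] at this)
  set μ : Measure (EuclideanSpace ℝ (Fin d)) := volume
  rw [← MeasureTheory.restrict_compl_singleton (μ := μ) (0 : EuclideanSpace ℝ (Fin d))]
  have hms : MeasurableSet ({(0 : EuclideanSpace ℝ (Fin d))}ᶜ) :=
    (measurableSet_singleton _).compl
  rw [← map_comap_subtype_coe hms μ,
    (MeasurableEmbedding.subtype_coe hms).integrable_map_iff]
  have e := μ.measurePreserving_homeomorphUnitSphereProd
  have := (e.integrable_comp_emb
      (Homeomorph.measurableEmbedding _)
      (g := fun p : (sphere (0:EuclideanSpace ℝ (Fin d)) 1) × Ioi (0:ℝ) => h p.2.1))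
  rw [show ((fun x : EuclideanSpace ℝ (Fin d) => h ‖x‖) ∘ (Subtype.val)) =
      ((fun p : (sphere (0:EuclideanSpace ℝ (Fin d)) 1) × Ioi (0:ℝ) => h p.2.1) ∘
        (homeomorphUnitSphereProd (EuclideanSpace ℝ (Fin d)))) from by
      funext x; simp [homeomorphUnitSphereProd, homeomorphSphereProd], this]
  have hfin : finrank ℝ (EuclideanSpace ℝ (Fin d)) = d := finrank_euclideanSpace_fin
  have hι : Integrable (fun r : Ioi (0:ℝ) => h r.1)
      (Measure.volumeIoiPow (finrank ℝ (EuclideanSpace ℝ (Fin d)) - 1)) := by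
    rw [hfin, Measure.volumeIoiPow]
    rw [integrable_withDensity_iff (by fun_prop) (by
      filter_upwards with x using ENNReal.ofReal_lt_top)]
    have : Integrable (fun r : ℝ => h r * r ^ (d-1)) (volume.restrict (Ioi 0)) := by
      refine hint.congr_fun (fun r hr => by ring) measurableSet_Ioi
    rw [← map_comap_subtype_coe measurableSet_Ioi volume,
      (MeasurableEmbedding.subtype_coe measurableSet_Ioi).integrable_map_iff] at this
    refine this.congr ?_
    filter_upwards with x
    simp only [Function.comp]
    rw [ENNReal.toReal_ofReal (pow_nonneg (le_of_lt x.2) _)]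
  have h1 : Integrable (fun _ : (sphere (0:EuclideanSpace ℝ (Fin d)) 1) => (1:ℝ))
      μ.toSphere := integrable_const _
  have := h1.mul_prod hι
  refine this.congr ?_
  filter_upwards with p
  simp

lemma oneD_integrable (d : ℕ) (hd2 : 2 ≤ d) (κ ν : ℝ) (hν0 : 0 < ν)
    (hνκ : ν < κ - d + 2) :
    IntegrableOn (fun r : ℝ => r ^ (d - 1) * (r ^ (ν - 2) * (1 + r ^ 2) ^ (-κ / 2)))
      (Ioi 0) volume := by
  set M : ℝ := max 1 ((2:ℝ) ^ (-κ / 2)) with hM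
  have hM1 : (1:ℝ) ≤ M := le_max_left _ _
  have hM0 : 0 < M := lt_of_lt_of_le one_pos hM1
  have hdR : (2:ℝ) ≤ (d:ℝ) := by exact_mod_cast hd2
  have hcast : ((d - 1 : ℕ) : ℝ) = (d:ℝ) - 1 := by
    push_cast [Nat.cast_sub (by omega : 1 ≤ d)]; ring
  rw [← Ioc_union_Ioi_eq_Ioi (zero_le_one : (0:ℝ) ≤ 1)]
  have hmeas : Measurable fun r : ℝ => r ^ (d - 1) * (r ^ (ν - 2) * (1 + r ^ 2) ^ (-κ / 2)) := by
    fun_prop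
  apply IntegrableOn.union
  · have hig : IntegrableOn (fun r : ℝ => M * r ^ ((d:ℝ) - 3 + ν)) (Ioc 0 1) volume := by
      refine Integrable.const_mul ?_ M
      have h' := intervalIntegral.intervalIntegrable_rpow' (a := 0) (b := 1)
        (show (-1:ℝ) < (d:ℝ) - 3 + ν by linarith)
      rwa [intervalIntegrable_iff_integrableOn_Ioc_of_le zero_le_one] at h'
    refine Integrable.mono' hig hmeas.aestronglyMeasurable.restrict ?_
    filter_upwards [ae_restrict_mem measurableSet_Ioc] with r hr
    obtain ⟨hr0, hr1⟩ := hr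
    have key : (1 + r ^ 2) ^ (-κ / 2) ≤ M := by
      rcases le_or_gt (-κ / 2) 0 with hk | hk
      · have h1 : (1 + r ^ 2) ^ (-κ / 2) ≤ (1:ℝ) ^ (-κ / 2) :=
          Real.rpow_le_rpow_of_nonpos one_pos (by nlinarith) hk
        rw [Real.one_rpow] at h1
        exact h1.trans hM1
      · have h1 : (1 + r ^ 2) ^ (-κ / 2) ≤ (2:ℝ) ^ (-κ / 2) :=
          Real.rpow_le_rpow (by positivity) (by nlinarith) hk.le
        exact h1.trans (le_max_right _ _)
    have e : r ^ (d - 1) * r ^ (ν - 2) = r ^ ((d:ℝ) - 3 + ν) := by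
      rw [← Real.rpow_natCast r (d - 1), ← Real.rpow_add hr0, hcast]
      congr 1; ring
    rw [norm_of_nonneg (by positivity)]
    calc r ^ (d - 1) * (r ^ (ν - 2) * (1 + r ^ 2) ^ (-κ / 2))
        ≤ r ^ (d - 1) * (r ^ (ν - 2) * M) := by gcongr
      _ = M * r ^ ((d:ℝ) - 3 + ν) := by rw [← e]; ring
  · have hig : IntegrableOn (fun r : ℝ => M * r ^ ((d:ℝ) - 3 + ν - κ)) (Ioi 1) volume := by
      refine Integrable.const_mul ?_ M
      exact integrableOn_Ioi_rpow_of_lt (by linarith) one_pos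
    refine Integrable.mono' hig hmeas.aestronglyMeasurable.restrict ?_
    filter_upwards [ae_restrict_mem measurableSet_Ioi] with r hr
    have hr1 : (1:ℝ) < r := hr
    have hr0 : (0:ℝ) < r := lt_trans one_pos hr1
    have hsq : (r ^ 2 : ℝ) ^ (-κ / 2) = r ^ (-κ) := by
      rw [← Real.rpow_natCast r 2, ← Real.rpow_mul hr0.le]
      congr 1; push_cast; ring
    have key : (1 + r ^ 2) ^ (-κ / 2) ≤ M * r ^ (-κ) := by
      rcases le_or_gt (-κ / 2) 0 with hk | hk
      · have h1 : (1 + r ^ 2) ^ (-κ / 2) ≤ (r ^ 2 : ℝ) ^ (-κ / 2) :=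
          Real.rpow_le_rpow_of_nonpos (by positivity) (by nlinarith) hk
        rw [hsq] at h1
        refine h1.trans ?_
        nlinarith [Real.rpow_nonneg hr0.le (-κ)]
      · have h1 : (1 + r ^ 2) ^ (-κ / 2) ≤ (2 * r ^ 2 : ℝ) ^ (-κ / 2) :=
          Real.rpow_le_rpow (by positivity) (by nlinarith) hk.le
        rw [Real.mul_rpow (by norm_num) (by positivity), hsq] at h1
        refine h1.trans ?_
        gcongr
        exact le_max_right _ _
    have e : r ^ (d - 1) * r ^ (ν - 2) * r ^ (-κ) = r ^ ((d:ℝ) - 3 + ν - κ) := by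
      rw [← Real.rpow_natCast r (d - 1), ← Real.rpow_add hr0, ← Real.rpow_add hr0, hcast]
      congr 1; ring
    rw [norm_of_nonneg (by positivity)]
    calc r ^ (d - 1) * (r ^ (ν - 2) * (1 + r ^ 2) ^ (-κ / 2))
        ≤ r ^ (d - 1) * (r ^ (ν - 2) * (M * r ^ (-κ))) := by gcongr
      _ = M * (r ^ (d - 1) * r ^ (ν - 2) * r ^ (-κ)) := by ring
      _ = M * r ^ ((d:ℝ) - 3 + ν - κ) := by rw [e]

/-- hypothesis (h3) for Bessel kernels. For `d ∈ {2,3}`, `κ > d-2`,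
`T > 0` and `0 < ν < min(2, κ-d+2)`, the spectral integral of the squared wave Fourier
transform against the Bessel spectral density is bounded by `C·tᵛ` on `(0,T]`. -/
theorem stmt16 (d : ℕ) (hd : d = 2 ∨ d = 3) (κ T ν : ℝ) (hκ : (d : ℝ) - 2 < κ)
    (hT : 0 < T) (hν0 : 0 < ν) (hν : ν < min 2 (κ - d + 2)) :
    ∃ C > 0, ∀ t : ℝ, 0 < t → t ≤ T →
      (∫ ζ : EuclideanSpace ℝ (Fin d),
          (Real.sin (t * ‖ζ‖) / ‖ζ‖) ^ 2 * (1 + ‖ζ‖ ^ 2) ^ (-κ / 2))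
        ≤ C * t ^ ν := by
  have hd2 : 2 ≤ d := by rcases hd with h | h <;> omega
  have hd0 : 0 < d := by omega
  have hν2 : ν < 2 := lt_of_lt_of_le hν (min_le_left _ _)
  have hνκ : ν < κ - d + 2 := lt_of_lt_of_le hν (min_le_right _ _)
  have hg : Integrable (fun ζ : EuclideanSpace ℝ (Fin d) =>
      ‖ζ‖ ^ (ν - 2) * (1 + ‖ζ‖ ^ 2) ^ (-κ / 2)) :=
    integrable_comp_norm hd0 (fun r => r ^ (ν - 2) * (1 + r ^ 2) ^ (-κ / 2))
      (oneD_integrable d hd2 κ ν hν0 hνκ)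
  have hI0 : 0 ≤ ∫ ζ : EuclideanSpace ℝ (Fin d),
      ‖ζ‖ ^ (ν - 2) * (1 + ‖ζ‖ ^ 2) ^ (-κ / 2) :=
    integral_nonneg fun ζ => by positivity
  refine ⟨(∫ ζ : EuclideanSpace ℝ (Fin d),
      ‖ζ‖ ^ (ν - 2) * (1 + ‖ζ‖ ^ 2) ^ (-κ / 2)) + 1, by linarith, fun t ht htT => ?_⟩
  have step1 : (∫ ζ : EuclideanSpace ℝ (Fin d),
      (Real.sin (t * ‖ζ‖) / ‖ζ‖) ^ 2 * (1 + ‖ζ‖ ^ 2) ^ (-κ / 2))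
      ≤ ∫ ζ : EuclideanSpace ℝ (Fin d),
        t ^ ν * (‖ζ‖ ^ (ν - 2) * (1 + ‖ζ‖ ^ 2) ^ (-κ / 2)) := by
    refine integral_mono_of_nonneg ?_ (hg.const_mul _) ?_
    · filter_upwards with ζ
      positivity
    · filter_upwards with ζ
      have hb := pw_bound hν0 hν2 ht (norm_nonneg ζ)
      calc (Real.sin (t * ‖ζ‖) / ‖ζ‖) ^ 2 * (1 + ‖ζ‖ ^ 2) ^ (-κ / 2)
          ≤ (t ^ ν * ‖ζ‖ ^ (ν - 2)) * (1 + ‖ζ‖ ^ 2) ^ (-κ / 2) := by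
            apply mul_le_mul_of_nonneg_right hb (by positivity)
        _ = t ^ ν * (‖ζ‖ ^ (ν - 2) * (1 + ‖ζ‖ ^ 2) ^ (-κ / 2)) := by ring
  rw [MeasureTheory.integral_const_mul] at step1
  refine step1.trans ?_
  rw [add_mul, one_mul]
  have htν : 0 ≤ t ^ ν := Real.rpow_nonneg ht.le ν
  nlinarith
end

section
/- Let d ∈ {2,3} and H = (H₁,…,H_d) with 1/2 < H_i < 1 for every i. Then the integral ∫_{ℝ^d} (∏_{i=1}^d |ζ_i|^{1−2H_i}) / (1 + |ζ|²) dζ is finite if and only if ∑_{i=1}^d H_i > d − 1. -/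
open MeasureTheory Real Set

/-- One-dimensional integrability of `|x|^a * exp (-t x²)` for `t > 0`, `a > -1`. -/
lemma aux_int1d {a t : ℝ} (ht : 0 < t) (ha : -1 < a) :
    Integrable (fun x : ℝ => |x| ^ a * Real.exp (-t * x ^ 2)) := by
  have hpos : IntegrableOn (fun x : ℝ => |x| ^ a * Real.exp (-t * x ^ 2)) (Ioi 0) :=
    (integrableOn_rpow_mul_exp_neg_mul_sq ht ha).congr_fun
      (fun x hx => by rw [abs_of_pos (mem_Ioi.mp hx)]) measurableSet_Ioi
  rw [← integrableOn_univ, ← Iio_union_Ici (a := (0 : ℝ)), integrableOn_union,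
    integrableOn_Ici_iff_integrableOn_Ioi]
  refine ⟨?_, hpos⟩
  rw [← (Measure.measurePreserving_neg (volume : Measure ℝ)).integrableOn_comp_preimage
      (Homeomorph.neg ℝ).measurableEmbedding]
  simp only [Function.comp_def, neg_preimage, neg_Iio, neg_neg, neg_zero, abs_neg, neg_sq]
  exact hpos

/-- Scaling of the one-dimensional Gaussian moment integral. -/
lemma aux_val {a t : ℝ} (ht : 0 < t) :
    ∫ x : ℝ, |x| ^ a * Real.exp (-t * x ^ 2)
      = t ^ (-(a + 1) / 2) * ∫ x : ℝ, |x| ^ a * Real.exp (-x ^ 2) := by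
  set c : ℝ := t ^ (-(1 : ℝ) / 2) with hc
  have hcpos : 0 < c := Real.rpow_pos_of_pos ht _
  have hc2 : c ^ 2 = t⁻¹ := by
    rw [hc, ← Real.rpow_natCast (t ^ (-(1 : ℝ) / 2)) 2, ← Real.rpow_mul ht.le]
    norm_num [Real.rpow_neg_one]
  have key := MeasureTheory.Measure.integral_comp_mul_left
      (fun x : ℝ => |x| ^ a * Real.exp (-t * x ^ 2)) c
  have hfun : ∀ x : ℝ, |c * x| ^ a * Real.exp (-t * (c * x) ^ 2)
      = c ^ a * (|x| ^ a * Real.exp (-x ^ 2)) := by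
    intro x
    have h1 : |c * x| ^ a = c ^ a * |x| ^ a := by
      rw [abs_mul, abs_of_pos hcpos, Real.mul_rpow hcpos.le (abs_nonneg x)]
    have h2 : -t * (c * x) ^ 2 = -x ^ 2 := by
      have h : (c * x) ^ 2 = c ^ 2 * x ^ 2 := by ring
      rw [h, hc2]
      field_simp
    rw [h1, h2]; ring
  simp only [hfun, integral_const_mul, smul_eq_mul, abs_of_pos (inv_pos.mpr hcpos)] at key
  have hI : ∫ x : ℝ, |x| ^ a * Real.exp (-t * x ^ 2)
      = c * (c ^ a * ∫ x : ℝ, |x| ^ a * Real.exp (-x ^ 2)) := by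
    rw [key, ← mul_assoc, mul_inv_cancel₀ hcpos.ne', one_mul]
  rw [hI, ← mul_assoc]
  congr 1
  have h3 : c * c ^ a = c ^ (1 + a) := by
    rw [Real.rpow_add hcpos, Real.rpow_one]
  rw [h3, hc, ← Real.rpow_mul ht.le]
  congr 1
  ring

/-- Positivity of the Gaussian moment constant. -/
lemma aux_Cpos {a : ℝ} (ha : -1 < a) :
    0 < ∫ x : ℝ, |x| ^ a * Real.exp (-x ^ 2) := by
  have hint : Integrable (fun x : ℝ => |x| ^ a * Real.exp (-x ^ 2)) := by
    have := aux_int1d (t := 1) one_pos ha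
    simpa using this
  have hnn : 0 ≤ fun x : ℝ => |x| ^ a * Real.exp (-x ^ 2) := fun x =>
    mul_nonneg (Real.rpow_nonneg (abs_nonneg x) a) (Real.exp_pos _).le
  rw [integral_pos_iff_support_of_nonneg hnn hint]
  refine lt_of_lt_of_le ?_ (measure_mono (fun x (hx : x ∈ Ioi (0 : ℝ)) => ?_))
  · rw [Real.volume_Ioi]
    exact ENNReal.zero_lt_top
  · exact (mul_pos (Real.rpow_pos_of_pos (abs_pos.mpr (mem_Ioi.mp hx).ne') a)
      (Real.exp_pos _)).ne'

/-- The Gamma-type integral `∫₀^∞ e^{-t} t^{-β}` converges iff `β < 1`. -/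
lemma aux_gamma {β : ℝ} :
    IntegrableOn (fun t : ℝ => Real.exp (-t) * t ^ (-β)) (Ioi 0) ↔ β < 1 := by
  constructor
  · intro h
    by_contra hβ
    push_neg at hβ
    have h1 : IntegrableOn (fun t : ℝ => Real.exp (-t) * t ^ (-β)) (Ioo 0 1) :=
      h.mono_set Ioo_subset_Ioi_self
    have h2 : IntegrableOn (fun t : ℝ => t ^ (-β)) (Ioo (0 : ℝ) 1) := by
      refine Integrable.mono' (h1.const_mul (Real.exp 1))
        (Measurable.aestronglyMeasurable (by fun_prop)) ?_
      filter_upwards [ae_restrict_mem measurableSet_Ioo] with x hx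
      have hx0 : (0 : ℝ) < x := hx.1
      have hp : (0 : ℝ) < x ^ (-β) := Real.rpow_pos_of_pos hx0 _
      rw [Real.norm_of_nonneg hp.le]
      have he : (1 : ℝ) ≤ Real.exp 1 * Real.exp (-x) := by
        rw [← Real.exp_add]
        exact Real.one_le_exp (by linarith [hx.2])
      nlinarith
    rw [intervalIntegral.integrableOn_Ioo_rpow_iff one_pos] at h2
    linarith
  · intro hβ
    have h := Real.GammaIntegral_convergent (s := 1 - β) (by linarith)
    simpa only [show (1 : ℝ) - β - 1 = -β from by ring] using h

/-- The exponential integral `∫₀^∞ e^{-ct} dt = c⁻¹`. -/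
lemma aux_exp_int {c : ℝ} (hc : 0 < c) :
    ∫ t in Ioi (0 : ℝ), Real.exp (-(c * t)) = c⁻¹ := by
  have h := integral_comp_mul_left_Ioi (fun u => Real.exp (-u)) 0 hc
  rw [mul_zero, integral_exp_neg_Ioi_zero, smul_eq_mul, mul_one] at h
  exact h

/-- hypothesis (h0) for fractional kernels. For `d ∈ {2,3}` and
`1/2 < Hᵢ < 1`, the integral `∫_{ℝ^d} (∏ᵢ |ζᵢ|^{1-2Hᵢ})/(1+|ζ|²) dζ` is finite iff
`∑ᵢ Hᵢ > d - 1`. -/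
theorem stmt17 (d : ℕ) (hd : d = 2 ∨ d = 3) (H : Fin d → ℝ)
    (hH : ∀ i, 1 / 2 < H i ∧ H i < 1) :
    Integrable (fun ζ : EuclideanSpace ℝ (Fin d) =>
        (∏ i, |ζ i| ^ (1 - 2 * H i)) / (1 + ‖ζ‖ ^ 2))
      ↔ (d : ℝ) - 1 < ∑ i, H i := by
  classical
  set α : Fin d → ℝ := fun i => 1 - 2 * H i with hα
  have hα1 : ∀ i, -1 < α i := fun i => by
    have := (hH i).2; simp only [hα]; linarith
  set g : (Fin d → ℝ) → ℝ := fun x => (∏ i, |x i| ^ α i) / (1 + ∑ i, (x i) ^ 2) with hg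
  -- Step 1: transfer from EuclideanSpace to the pi space
  have hFG : (fun ζ : EuclideanSpace ℝ (Fin d) =>
      (∏ i, |ζ i| ^ (1 - 2 * H i)) / (1 + ‖ζ‖ ^ 2))
      = g ∘ ((MeasurableEquiv.toLp 2 (Fin d → ℝ)).symm) := by
    funext ζ
    have hnorm : ‖ζ‖ ^ 2 = ∑ i, (ζ i) ^ 2 := by
      rw [EuclideanSpace.norm_eq, Real.sq_sqrt (Finset.sum_nonneg fun i _ => sq_nonneg _)]
      simp [Real.norm_eq_abs, sq_abs]
    simp only [hg, hα, Function.comp_apply]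
    rw [hnorm]
    rfl
  have step1 : Integrable (fun ζ : EuclideanSpace ℝ (Fin d) =>
      (∏ i, |ζ i| ^ (1 - 2 * H i)) / (1 + ‖ζ‖ ^ 2)) ↔ Integrable g := by
    rw [hFG]
    exact (EuclideanSpace.volume_preserving_symm_measurableEquiv_toLp (Fin d)).integrable_comp_emb
      ((MeasurableEquiv.toLp 2 (Fin d → ℝ)).symm).measurableEmbedding
  -- Step 2: Tonelli in the `t` variable
  set μ : Measure ℝ := volume.restrict (Ioi 0) with hμ
  set G : ℝ × (Fin d → ℝ) → ℝ := fun p =>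
    (∏ i, |p.2 i| ^ α i) * Real.exp (-((1 + ∑ i, (p.2 i) ^ 2) * p.1)) with hG
  have hGnn : ∀ p, 0 ≤ G p := fun p =>
    mul_nonneg (Finset.prod_nonneg fun i _ => Real.rpow_nonneg (abs_nonneg _) _)
      (Real.exp_pos _).le
  have hGmeas : AEStronglyMeasurable G (μ.prod (volume : Measure (Fin d → ℝ))) := by
    apply Measurable.aestronglyMeasurable
    rw [hG]
    fun_prop
  have hcpos : ∀ x : Fin d → ℝ, 0 < 1 + ∑ i, (x i) ^ 2 := fun x => by positivity
  have slice_t : ∀ x : Fin d → ℝ, Integrable (fun t => G (t, x)) μ := by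
    intro x
    have h : IntegrableOn (fun t : ℝ => Real.exp (-(1 + ∑ i, (x i) ^ 2) * t)) (Ioi 0) :=
      exp_neg_integrableOn_Ioi 0 (hcpos x)
    have h2 : Integrable
        (fun t : ℝ => (∏ i, |x i| ^ α i) * Real.exp (-(1 + ∑ i, (x i) ^ 2) * t)) μ :=
      h.const_mul _
    simp only [neg_mul] at h2
    simpa only [hG] using h2
  have tint : ∀ x : Fin d → ℝ, (∫ t, ‖G (t, x)‖ ∂μ) = g x := by
    intro x
    have h1 : ∀ t : ℝ, ‖G (t, x)‖ = G (t, x) := fun t => Real.norm_of_nonneg (hGnn _)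
    simp only [h1]
    simp only [hG]
    rw [hμ]
    rw [integral_const_mul, aux_exp_int (hcpos x)]
    simp [hg, div_eq_mul_inv]
  have hfun2 : (fun x : Fin d → ℝ => ∫ t, ‖G (t, x)‖ ∂μ) = g := funext tint
  have step2 : Integrable G (μ.prod volume) ↔ Integrable g := by
    rw [integrable_prod_iff' hGmeas, hfun2]
    exact and_iff_right (Filter.Eventually.of_forall slice_t)
  -- Step 3: the slices in the space variable
  set β : ℝ := ∑ i, (α i + 1) / 2 with hβ
  set C : Fin d → ℝ := fun i => ∫ x : ℝ, |x| ^ α i * Real.exp (-x ^ 2) with hC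
  have hCpos : ∀ i, 0 < C i := fun i => aux_Cpos (hα1 i)
  have hGsplit : ∀ (t : ℝ) (x : Fin d → ℝ),
      G (t, x) = Real.exp (-t) * ∏ i, (|x i| ^ α i * Real.exp (-t * (x i) ^ 2)) := by
    intro t x
    simp only [hG]
    rw [Finset.prod_mul_distrib]
    have h : Real.exp (-((1 + ∑ i, (x i) ^ 2) * t))
        = Real.exp (-t) * ∏ i, Real.exp (-t * (x i) ^ 2) := by
      rw [← Real.exp_sum, ← Real.exp_add]
      congr 1
      rw [← Finset.mul_sum]
      ring
    rw [h]; ring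
  have slice_x : ∀ t ∈ Ioi (0 : ℝ), Integrable (fun x : Fin d → ℝ => G (t, x)) := by
    intro t ht
    have h : Integrable (fun x : Fin d → ℝ =>
        ∏ i, (|x i| ^ α i * Real.exp (-t * (x i) ^ 2))) :=
      Integrable.fintype_prod (f := fun i u => |u| ^ α i * Real.exp (-t * u ^ 2))
        (fun i => aux_int1d (mem_Ioi.mp ht) (hα1 i))
    simpa only [hGsplit t] using h.const_mul (Real.exp (-t))
  have xint : ∀ t ∈ Ioi (0 : ℝ),
      (∫ x : Fin d → ℝ, ‖G (t, x)‖) = (∏ i, C i) * (Real.exp (-t) * t ^ (-β)) := by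
    intro t ht
    have ht0 : (0 : ℝ) < t := mem_Ioi.mp ht
    have h1 : ∀ x : Fin d → ℝ, ‖G (t, x)‖ = G (t, x) := fun x => Real.norm_of_nonneg (hGnn _)
    simp only [h1]
    simp only [hGsplit t]
    rw [integral_const_mul,
      integral_fintype_prod_volume_eq_prod (ι := Fin d) (fun i u => |u| ^ α i * Real.exp (-t * u ^ 2))]
    rw [Finset.prod_congr rfl (fun i _ => aux_val (a := α i) ht0), Finset.prod_mul_distrib]
    have h3 : (∏ i, t ^ (-(α i + 1) / 2)) = t ^ (-β) := by
      simp only [Real.rpow_def_of_pos ht0]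
      rw [← Real.exp_sum]
      congr 1
      rw [hβ, ← Finset.mul_sum]
      congr 1
      rw [← Finset.sum_neg_distrib]
      exact Finset.sum_congr rfl fun i _ => by ring
    rw [h3]
    ring
  have step3 : Integrable G (μ.prod volume) ↔
      Integrable (fun t : ℝ => Real.exp (-t) * t ^ (-β)) μ := by
    rw [integrable_prod_iff hGmeas]
    have hae1 : ∀ᵐ t ∂μ, Integrable (fun x => G (t, x)) := by
      rw [hμ]
      filter_upwards [ae_restrict_mem measurableSet_Ioi] with t ht using slice_x t ht
    have hae2 : (fun t => ∫ x, ‖G (t, x)‖)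
        =ᵐ[μ] fun t => (∏ i, C i) * (Real.exp (-t) * t ^ (-β)) := by
      rw [hμ]
      filter_upwards [ae_restrict_mem measurableSet_Ioi] with t ht using xint t ht
    rw [and_iff_right hae1, integrable_congr hae2]
    have hCne : (∏ i, C i) ≠ 0 := (Finset.prod_pos fun i _ => hCpos i).ne'
    constructor
    · intro h
      have h' := h.const_mul (∏ i, C i)⁻¹
      simpa only [← mul_assoc, inv_mul_cancel₀ hCne, one_mul] using h'
    · intro h
      exact h.const_mul _
  -- Conclusion
  rw [step1, ← step2, step3]
  have hIoi : Integrable (fun t : ℝ => Real.exp (-t) * t ^ (-β)) μ ↔ β < 1 := by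
    rw [hμ]; exact aux_gamma
  rw [hIoi]
  have hβval : β = (d : ℝ) - ∑ i, H i := by
    rw [hβ]
    have h : ∀ i, (α i + 1) / 2 = 1 - H i := fun i => by simp only [hα]; ring
    rw [Finset.sum_congr rfl fun i _ => h i, Finset.sum_sub_distrib, Finset.sum_const,
      Finset.card_univ, Fintype.card_fin]
    simp
  rw [hβval]
  constructor <;> intro <;> linarith
end

section
/- Let d ∈ {2,3} and H = (H₁,…,H_d) with 1/2 < H_i < 1 for every i and ∑_{i=1}^d H_i > d − 1, and set κ̄ = ∑_{i=1}^d H_i − (d − 1) > 0. Then for every γ > 0, the integral ∫_{ℝ^d} (∏_{i=1}^d |ζ_i|^{1−2H_i}) / (1 + |ζ|^{2−2γ}) dζ is finite if and only if γ < κ̄. -/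
open MeasureTheory Set

private lemma rpow_sum_eq_prod {ι : Type*} {x : ℝ} (hx : 0 < x) (s : Finset ι) (a : ι → ℝ) :
    x ^ (∑ i ∈ s, a i) = ∏ i ∈ s, x ^ a i := by
  classical
  induction s using Finset.induction_on with
  | empty => simp
  | insert _ _ h ih =>
      rw [Finset.sum_insert h, Finset.prod_insert h, Real.rpow_add hx, ih]

/-- 1D integrability of `|t|^a * (max 1 |t|)^b` when `-1 < a` and `a + b < -1`. -/
private lemma integrable_abs_rpow_max {a b : ℝ} (ha : -1 < a) (hab : a + b < -1) :
    Integrable (fun t : ℝ => |t| ^ a * max 1 |t| ^ b) := by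
  set φ : ℝ → ℝ := fun t => |t| ^ a * max 1 |t| ^ b with hφ
  have heven : ∀ t, φ (-t) = φ t := by intro t; simp [hφ, abs_neg]
  have hIoi : IntegrableOn φ (Ioi (0:ℝ)) := by
    have h1 : IntegrableOn φ (Ioo (0:ℝ) 1) := by
      refine ((intervalIntegral.integrableOn_Ioo_rpow_iff one_pos).2 ha).congr_fun ?_ measurableSet_Ioo
      intro t ht
      have h0 : |t| = t := abs_of_pos ht.1
      have h1 : max 1 |t| = 1 := max_eq_left (by rw [h0]; exact ht.2.le)
      show t ^ a = |t| ^ a * max 1 |t| ^ b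
      rw [h1, h0, Real.one_rpow, mul_one]
    have h2 : IntegrableOn φ (Ici (1:ℝ)) := by
      have : IntegrableOn (fun t : ℝ => t ^ (a + b)) (Ici (1:ℝ)) :=
        (integrableOn_Ici_iff_integrableOn_Ioi).2 ((integrableOn_Ioi_rpow_iff one_pos).2 hab)
      refine this.congr_fun ?_ measurableSet_Ici
      intro t ht
      have h0 : (0:ℝ) < t := lt_of_lt_of_le one_pos ht
      have h1 : |t| = t := abs_of_pos h0
      have h2 : max 1 |t| = t := by rw [h1]; exact max_eq_right ht
      show t ^ (a + b) = |t| ^ a * max 1 |t| ^ b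
      rw [h2, h1]; exact Real.rpow_add h0 a b
    have := h1.union h2
    rwa [Ioo_union_Ici_eq_Ioi one_pos] at this
  have hIio : IntegrableOn φ (Iio (0:ℝ)) := by
    have hmape : Measure.map (fun t : ℝ => -t) volume = volume :=
      (Measure.measurePreserving_neg (volume : Measure ℝ)).map_eq
    have hpre : (fun t : ℝ => -t) ⁻¹' (Iio 0) = Ioi 0 := by
      ext t; simp
    have hmap : Measure.map (fun t : ℝ => -t) (volume.restrict (Ioi (0:ℝ)))
        = volume.restrict (Iio 0) := by
      rw [← hpre, ← Measure.restrict_map measurable_neg measurableSet_Iio, hmape]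
    have mp : MeasurePreserving (fun t : ℝ => -t) (volume.restrict (Ioi (0:ℝ)))
        (volume.restrict (Iio (0:ℝ))) := ⟨measurable_neg, hmap⟩
    have hemb : MeasurableEmbedding (fun t : ℝ => -t) :=
      (Homeomorph.neg ℝ).measurableEmbedding
    have hiff := mp.integrable_comp_emb hemb (g := φ)
    have hcomp : (φ ∘ fun t : ℝ => -t) = φ := funext fun t => heven t
    rw [hcomp] at hiff
    exact hiff.1 hIoi
  have hunion : IntegrableOn φ (Iio (0:ℝ) ∪ Ioi 0) := hIio.union hIoi
  rw [Set.Iio_union_Ioi] at hunion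
  have h0 : (volume : Measure ℝ).restrict ({(0:ℝ)}ᶜ) = volume := by
    apply Measure.restrict_eq_self_of_ae_mem
    rw [ae_iff]
    simp
  rwa [IntegrableOn, h0] at hunion

set_option maxHeartbeats 1600000 in
/-- hypothesis (h2) for fractional kernels. For `d ∈ {2,3}`,
`1/2 < Hᵢ < 1` with `∑ᵢ Hᵢ > d - 1` and `κ̄ = ∑ᵢ Hᵢ - (d-1)`, for every `γ > 0` the
integral `∫_{ℝ^d} (∏ᵢ |ζᵢ|^{1-2Hᵢ})/(1+|ζ|^{2-2γ}) dζ` is finite iff `γ < κ̄`. -/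
theorem stmt18 (d : ℕ) (hd : d = 2 ∨ d = 3) (H : Fin d → ℝ)
    (hH : ∀ i, 1 / 2 < H i ∧ H i < 1) (hsum : (d : ℝ) - 1 < ∑ i, H i)
    (γ : ℝ) (hγ : 0 < γ) :
    Integrable (fun ζ : EuclideanSpace ℝ (Fin d) =>
        (∏ i, |ζ i| ^ (1 - 2 * H i)) / (1 + ‖ζ‖ ^ (2 - 2 * γ)))
      ↔ γ < (∑ i, H i) - ((d : ℝ) - 1) := by
  have hdpos : 0 < d := by rcases hd with h | h <;> omega
  have : Nonempty (Fin d) := ⟨⟨0, hdpos⟩⟩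
  have hd4 : (d : ℝ) ≤ 4 := by rcases hd with h | h <;> (subst h; norm_num)
  have hd1 : (1 : ℝ) ≤ (d : ℝ) := by exact_mod_cast hdpos
  have hd0 : (d : ℝ) ≠ 0 := by positivity
  set S : ℝ := ∑ i, H i with hS
  have hSd : S < (d : ℝ) := by
    have h := Finset.sum_lt_sum_of_nonempty (Finset.univ_nonempty (α := Fin d))
      (fun i _ => (hH i).2)
    rw [hS]; simpa using h
  have hκ1 : S - ((d : ℝ) - 1) < 1 := by linarith
  have hκ0 : 0 < S - ((d : ℝ) - 1) := by linarith
  set f : EuclideanSpace ℝ (Fin d) → ℝ := fun ζ =>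
    (∏ i, |ζ i| ^ (1 - 2 * H i)) / (1 + ‖ζ‖ ^ (2 - 2 * γ)) with hf
  have hden_pos : ∀ ζ : EuclideanSpace ℝ (Fin d), 0 < 1 + ‖ζ‖ ^ (2 - 2 * γ) := fun ζ => by
    have := Real.rpow_nonneg (norm_nonneg ζ) (2 - 2 * γ); linarith
  have hnum_nonneg : ∀ ζ : EuclideanSpace ℝ (Fin d), 0 ≤ ∏ i, |ζ i| ^ (1 - 2 * H i) :=
    fun ζ => Finset.prod_nonneg fun i _ => Real.rpow_nonneg (abs_nonneg _) _
  have hfnn : ∀ ζ, 0 ≤ f ζ := fun ζ => div_nonneg (hnum_nonneg ζ) (hden_pos ζ).le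
  have hfm : Measurable f := by
    apply Measurable.div
    · exact Finset.measurable_prod _ fun i _ =>
        (((measurable_pi_apply i).comp
          ((MeasurableEquiv.toLp 2 (Fin d → ℝ)).symm).measurable).abs.pow measurable_const)
    · exact measurable_const.add (measurable_norm.pow measurable_const)
  have hnormE : ∀ x : Fin d → ℝ,
      ‖((MeasurableEquiv.toLp 2 (Fin d → ℝ)).symm).symm x‖ = Real.sqrt (∑ i, (x i) ^ 2) := by
    intro x
    rw [EuclideanSpace.norm_eq]
    congr 1
    apply Finset.sum_congr rfl
    intro i _
    rw [show ‖(((MeasurableEquiv.toLp 2 (Fin d → ℝ)).symm).symm x) i‖ = ‖x i‖ from rfl,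
      Real.norm_eq_abs, sq_abs]
  constructor
  · -- Integrable → γ < κ̄
    intro hint
    by_contra hcon
    push_neg at hcon
    set m : ℝ := max (2 - 2 * γ) 0 with hm
    have hm0 : 0 ≤ m := le_max_right _ _
    have hmle : m ≤ 2 * (d : ℝ) - 2 * S := by
      apply max_le (by linarith) (by linarith)
    have hfin : ∫⁻ ζ, ENNReal.ofReal (f ζ) < ⊤ := by
      have h2 := hint.hasFiniteIntegral
      rwa [hasFiniteIntegral_iff_ofReal (Filter.Eventually.of_forall hfnn)] at h2
    set F : (Fin d → ℝ) → ENNReal := fun x =>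
      ENNReal.ofReal ((∏ i, |x i| ^ (1 - 2 * H i))
        / (1 + Real.sqrt (∑ i, (x i) ^ 2) ^ (2 - 2 * γ))) with hF
    have hFx : ∀ x : Fin d → ℝ,
        ENNReal.ofReal (f (((MeasurableEquiv.toLp 2 (Fin d → ℝ)).symm).symm x)) = F x := by
      intro x
      rw [hF, hf]
      show ENNReal.ofReal ((∏ i, |(((MeasurableEquiv.toLp 2 (Fin d → ℝ)).symm).symm x) i|
          ^ (1 - 2 * H i)) / (1 + ‖((MeasurableEquiv.toLp 2 (Fin d → ℝ)).symm).symm x‖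
          ^ (2 - 2 * γ))) = _
      rw [hnormE x]
      have hco : ∀ i : Fin d, (((MeasurableEquiv.toLp 2 (Fin d → ℝ)).symm).symm x) i = x i :=
        fun i => rfl
      simp only [hco]
    have htrans : ∫⁻ x, F x = ∫⁻ ζ, ENNReal.ofReal (f ζ) := by
      rw [← MeasurePreserving.lintegral_comp_emb
        (MeasurePreserving.symm ((MeasurableEquiv.toLp 2 (Fin d → ℝ)).symm)
          (EuclideanSpace.volume_preserving_symm_measurableEquiv_toLp (Fin d)))
        (MeasurableEquiv.measurableEmbedding _) (fun ζ => ENNReal.ofReal (f ζ))]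
      exact lintegral_congr fun x => (hFx x).symm
    have hFm : Measurable F := by
      apply Measurable.ennreal_ofReal
      apply Measurable.div
      · exact Finset.measurable_prod _ fun i _ =>
          ((measurable_pi_apply i).abs.pow measurable_const)
      · apply Measurable.add measurable_const
        exact ((Finset.measurable_sum Finset.univ fun i _ =>
          ((measurable_pi_apply i).pow_const 2)).sqrt).pow measurable_const
    set B : ℕ → Set (Fin d → ℝ) :=
      fun k => Set.pi Set.univ fun _ => Ico ((2 : ℝ) ^ (k : ℝ)) ((2 : ℝ) ^ ((k : ℝ) + 1)) with hB
    have hBm : ∀ k, MeasurableSet (B k) := fun k =>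
      MeasurableSet.univ_pi fun i => measurableSet_Ico
    set i0 : Fin d := ⟨0, hdpos⟩ with hi0
    have hdisj : Pairwise (Function.onFun Disjoint B) := by
      have key : ∀ k l : ℕ, k < l → Disjoint (B k) (B l) := by
        intro k l hkl
        rw [Set.disjoint_left]
        intro x hxk hxl
        have h1 := (Set.mem_univ_pi.1 hxk i0).2
        have h2 := (Set.mem_univ_pi.1 hxl i0).1
        have h3 : (2 : ℝ) ^ ((k : ℝ) + 1) ≤ 2 ^ (l : ℝ) := by
          apply Real.rpow_le_rpow_of_exponent_le one_le_two
          exact_mod_cast hkl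
        linarith
      intro k l hkl
      rcases hkl.lt_or_gt with h | h
      · exact key k l h
      · exact (key l k h).symm
    have hvol : ∀ k : ℕ, volume (B k) = ENNReal.ofReal ((2 : ℝ) ^ ((k : ℝ) * d)) := by
      intro k
      rw [hB, volume_pi_pi]
      have h2 : (volume (Ico ((2 : ℝ) ^ (k : ℝ)) ((2 : ℝ) ^ ((k : ℝ) + 1))))
          = ENNReal.ofReal ((2 : ℝ) ^ (k : ℝ)) := by
        rw [Real.volume_Ico]
        congr 1
        rw [Real.rpow_add two_pos, Real.rpow_one]
        ring
      simp only [h2, Finset.prod_const, Finset.card_univ, Fintype.card_fin]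
      rw [← ENNReal.ofReal_pow (Real.rpow_nonneg two_pos.le _)]
      congr 1
      rw [← Real.rpow_natCast ((2 : ℝ) ^ (k : ℝ)) d, ← Real.rpow_mul two_pos.le]
    have hbox : ∀ k : ℕ, ENNReal.ofReal ((1 / 2) * 2 ^ (2 * S - 3 * (d : ℝ)))
        ≤ ∫⁻ x in B k, F x := by
      intro k
      set p := (2 : ℝ) ^ (k : ℝ) with hp
      set q := (2 : ℝ) ^ ((k : ℝ) + 1) with hq
      set u := (2 : ℝ) ^ ((k : ℝ) + 2) with hu
      have hp1 : (1 : ℝ) ≤ p := Real.one_le_rpow one_le_two (Nat.cast_nonneg k)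
      have hq1 : (1 : ℝ) ≤ q := Real.one_le_rpow one_le_two (by positivity)
      have hu1 : (1 : ℝ) ≤ u := Real.one_le_rpow one_le_two (by positivity)
      have hqpos : (0 : ℝ) < q := by linarith
      have hupos : (0 : ℝ) < u := by linarith
      set r : ℝ := q ^ ((d : ℝ) - 2 * S) / (2 * u ^ m) with hr
      have hum_pos : (0 : ℝ) < u ^ m := Real.rpow_pos_of_pos hupos m
      have hrpos : 0 < r := div_pos (Real.rpow_pos_of_pos hqpos _) (by linarith)
      have hlow : ∀ x ∈ B k, ENNReal.ofReal r ≤ F x := by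
        intro x hx
        have hx' : ∀ i, p ≤ x i ∧ x i < q := by
          intro i
          exact Set.mem_univ_pi.1 hx i
        have hxpos : ∀ i, 0 < x i := fun i => lt_of_lt_of_le (by linarith) (hx' i).1
        have hnum : q ^ ((d : ℝ) - 2 * S) ≤ ∏ i, |x i| ^ (1 - 2 * H i) := by
          have e1 : ((d : ℝ) - 2 * S) = ∑ i, (1 - 2 * H i) := by
            rw [Finset.sum_sub_distrib, ← Finset.mul_sum, ← hS]
            simp
          rw [e1, rpow_sum_eq_prod hqpos]
          apply Finset.prod_le_prod (fun i _ => Real.rpow_nonneg hqpos.le _)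
          intro i _
          rw [abs_of_pos (hxpos i)]
          exact Real.rpow_le_rpow_of_nonpos (hxpos i) (hx' i).2.le (by linarith [(hH i).1])
        set N := Real.sqrt (∑ i, (x i) ^ 2) with hN
        have hNu : N ≤ u := by
          have h1 : ∑ i, (x i) ^ 2 ≤ u ^ 2 := by
            calc ∑ i, (x i) ^ 2 ≤ ∑ _i : Fin d, q ^ 2 :=
                  Finset.sum_le_sum fun i _ => pow_le_pow_left₀ (hxpos i).le (hx' i).2.le 2
              _ = (d : ℝ) * q ^ 2 := by
                  rw [Finset.sum_const, Finset.card_univ, Fintype.card_fin, nsmul_eq_mul]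
              _ ≤ 4 * q ^ 2 := by nlinarith [sq_nonneg q]
              _ = u ^ 2 := by
                  rw [hu, hq, show (k : ℝ) + 2 = ((k : ℝ) + 1) + 1 by ring,
                    Real.rpow_add two_pos ((k : ℝ) + 1) 1, Real.rpow_one]
                  ring
          calc N ≤ Real.sqrt (u ^ 2) := Real.sqrt_le_sqrt h1
            _ = u := Real.sqrt_sq hupos.le
        have hN1 : 1 ≤ N := by
          rw [hN, show (1 : ℝ) = Real.sqrt 1 by simp]
          apply Real.sqrt_le_sqrt
          calc (1 : ℝ) ≤ (x i0) ^ 2 := by nlinarith [(hx' i0).1, hp1]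
            _ ≤ ∑ i, (x i) ^ 2 :=
                Finset.single_le_sum (f := fun i => (x i) ^ 2)
                  (fun i _ => sq_nonneg _) (Finset.mem_univ i0)
        have hden : 1 + N ^ (2 - 2 * γ) ≤ 2 * u ^ m := by
          have h1u : 1 ≤ u ^ m := Real.one_le_rpow hu1 hm0
          have h2 : N ^ (2 - 2 * γ) ≤ u ^ m := by
            rcases le_total (2 - 2 * γ) 0 with h | h
            · calc N ^ (2 - 2 * γ) ≤ N ^ (0 : ℝ) :=
                    Real.rpow_le_rpow_of_exponent_le hN1 h
                _ = 1 := Real.rpow_zero N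
                _ ≤ u ^ m := h1u
            · have hm' : m = 2 - 2 * γ := max_eq_left h
              rw [hm']
              exact Real.rpow_le_rpow (Real.sqrt_nonneg _) hNu h
          linarith
        rw [hF]
        apply ENNReal.ofReal_le_ofReal
        rw [hr]
        exact div_le_div₀ (Finset.prod_nonneg fun i _ => Real.rpow_nonneg (abs_nonneg _) _)
          hnum (by
            have := Real.rpow_nonneg (Real.sqrt_nonneg (∑ i, (x i) ^ 2)) (2 - 2 * γ)
            linarith) hden
      calc ENNReal.ofReal ((1 / 2) * 2 ^ (2 * S - 3 * (d : ℝ)))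
          ≤ ENNReal.ofReal (r * (2 : ℝ) ^ ((k : ℝ) * d)) := by
            apply ENNReal.ofReal_le_ofReal
            have e1 : r * (2 : ℝ) ^ ((k : ℝ) * d) = (1 / 2) *
                2 ^ (((k : ℝ) + 1) * ((d : ℝ) - 2 * S) + (k : ℝ) * d - ((k : ℝ) + 2) * m) := by
              have hA : q ^ ((d : ℝ) - 2 * S) = (2 : ℝ) ^ (((k : ℝ) + 1) * ((d : ℝ) - 2 * S)) := by
                rw [hq, ← Real.rpow_mul two_pos.le]
              have hC : u ^ m = (2 : ℝ) ^ (((k : ℝ) + 2) * m) := by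
                rw [hu, ← Real.rpow_mul two_pos.le]
              have h3 : (2 : ℝ) ^ (((k : ℝ) + 1) * ((d : ℝ) - 2 * S) + (k : ℝ) * d
                    - ((k : ℝ) + 2) * m)
                  = (2 : ℝ) ^ (((k : ℝ) + 1) * ((d : ℝ) - 2 * S)) * (2 : ℝ) ^ ((k : ℝ) * d)
                    / (2 : ℝ) ^ (((k : ℝ) + 2) * m) := by
                rw [Real.rpow_sub two_pos, Real.rpow_add two_pos]
              rw [hr, hA, hC, h3]
              have hne : (2 : ℝ) ^ (((k : ℝ) + 2) * m) ≠ 0 :=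
                (Real.rpow_pos_of_pos two_pos _).ne'
              field_simp
            rw [e1]
            apply mul_le_mul_of_nonneg_left _ (by norm_num)
            apply Real.rpow_le_rpow_of_exponent_le one_le_two
            have hk0 : (0 : ℝ) ≤ (k : ℝ) := Nat.cast_nonneg k
            nlinarith [mul_nonneg hk0 (by linarith : (0 : ℝ) ≤ 2 * (d : ℝ) - 2 * S - m)]
        _ = ENNReal.ofReal r * volume (B k) := by
            rw [hvol k, ← ENNReal.ofReal_mul hrpos.le]
        _ = ∫⁻ _x in B k, ENNReal.ofReal r := (setLIntegral_const _ _).symm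
        _ ≤ ∫⁻ x in B k, F x := setLIntegral_mono hFm hlow
    have hc0 : ENNReal.ofReal ((1 / 2) * 2 ^ (2 * S - 3 * (d : ℝ))) ≠ 0 := by
      apply (ENNReal.ofReal_pos.2 _).ne'
      positivity
    have hUnion : (⊤ : ENNReal) ≤ ∫⁻ x, F x := by
      calc (⊤ : ENNReal) = ∑' _k : ℕ, ENNReal.ofReal ((1 / 2) * 2 ^ (2 * S - 3 * (d : ℝ))) :=
            (ENNReal.tsum_const_eq_top_of_ne_zero hc0).symm
        _ ≤ ∑' k : ℕ, ∫⁻ x in B k, F x := ENNReal.tsum_le_tsum hbox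
        _ = ∫⁻ x in ⋃ k, B k, F x := (lintegral_iUnion hBm hdisj F).symm
        _ ≤ ∫⁻ x, F x := lintegral_mono' Measure.restrict_le_self le_rfl
    rw [htrans, top_le_iff] at hUnion
    rw [hUnion] at hfin
    exact lt_irrefl _ hfin
  · -- γ < κ̄ → Integrable
    intro hγκ
    have hγ1 : γ < 1 := by linarith
    have h1γ : (0 : ℝ) < 1 - γ := by linarith
    have h1γ' : (1 : ℝ) - γ ≠ 0 := ne_of_gt h1γ
    set c : ℝ := 2 - 2 * γ with hc
    have hcpos : 0 < c := by rw [hc]; linarith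
    set θ : Fin d → ℝ := fun i => (1 - H i) / (1 - γ) + (1 - ((d : ℝ) - S) / (1 - γ)) / d with hθ
    have hrem : 0 < (1 - ((d : ℝ) - S) / (1 - γ)) / d := by
      apply div_pos _ (by positivity)
      rw [sub_pos, div_lt_one h1γ]
      linarith
    have hθgt : ∀ i, (1 - H i) / (1 - γ) < θ i := by
      intro i
      rw [hθ]
      linarith [hrem]
    have hθpos : ∀ i, 0 < θ i := fun i =>
      lt_of_le_of_lt (div_nonneg (by linarith [(hH i).2]) h1γ.le) (hθgt i)
    have hθsum : ∑ i, θ i = 1 := by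
      rw [hθ, Finset.sum_add_distrib, Finset.sum_const, Finset.card_univ, Fintype.card_fin,
        nsmul_eq_mul]
      have h1 : ∑ i, (1 - H i) / (1 - γ) = ((d : ℝ) - S) / (1 - γ) := by
        rw [← Finset.sum_div, Finset.sum_sub_distrib, ← hS]
        simp
      rw [h1, mul_comm, div_mul_cancel₀ _ hd0]
      ring
    set φ : Fin d → ℝ → ℝ := fun i t => |t| ^ (1 - 2 * H i) * max 1 |t| ^ (-(c * θ i)) with hφ'
    have hφint : ∀ i, Integrable (φ i) := by
      intro i
      apply integrable_abs_rpow_max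
      · linarith [(hH i).2]
      · have h3 : (1 - H i) < θ i * (1 - γ) := by
          have h2 : (1 - H i) / (1 - γ) * (1 - γ) = 1 - H i := by field_simp
          calc 1 - H i = (1 - H i) / (1 - γ) * (1 - γ) := h2.symm
            _ < θ i * (1 - γ) := mul_lt_mul_of_pos_right (hθgt i) h1γ
        have hcθ : 2 - 2 * H i < c * θ i := by rw [hc]; nlinarith
        linarith
    have hG : Integrable (fun x : Fin d → ℝ => ∏ i, φ i (x i)) :=
      Integrable.fintype_prod (𝕜 := ℝ) hφint
    have hGE : Integrable (fun ζ : EuclideanSpace ℝ (Fin d) => ∏ i, φ i (ζ i)) :=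
      ((EuclideanSpace.volume_preserving_symm_measurableEquiv_toLp (Fin d)).integrable_comp_emb
        (MeasurableEquiv.measurableEmbedding _)).2 hG
    refine hGE.mono' hfm.aestronglyMeasurable ?_
    filter_upwards with ζ
    rw [Real.norm_eq_abs, abs_of_nonneg (hfnn ζ)]
    have hcoord : ∀ i, |ζ i| ≤ ‖ζ‖ := by
      intro i
      rw [EuclideanSpace.norm_eq, ← Real.sqrt_sq_eq_abs]
      apply Real.sqrt_le_sqrt
      rw [show (ζ i) ^ 2 = ‖ζ i‖ ^ 2 by rw [Real.norm_eq_abs, sq_abs]]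
      exact Finset.single_le_sum (f := fun j => ‖ζ j‖ ^ 2)
        (fun j _ => sq_nonneg _) (Finset.mem_univ i)
    set D : ℝ := ∏ i, max 1 |ζ i| ^ (c * θ i) with hD
    have hDpos : 0 < D := Finset.prod_pos fun i _ =>
      Real.rpow_pos_of_pos (lt_of_lt_of_le one_pos (le_max_left _ _)) _
    have hDle : D ≤ 1 + ‖ζ‖ ^ c := by
      have hMpos : (0 : ℝ) < max 1 ‖ζ‖ := lt_of_lt_of_le one_pos (le_max_left _ _)
      have h1 : D ≤ max 1 ‖ζ‖ ^ c := by
        have e1 : max 1 ‖ζ‖ ^ c = ∏ i, max 1 ‖ζ‖ ^ (c * θ i) := by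
          rw [← rpow_sum_eq_prod hMpos Finset.univ]
          congr 1
          rw [← Finset.mul_sum, hθsum, mul_one]
        rw [e1, hD]
        apply Finset.prod_le_prod
          (fun i _ => Real.rpow_nonneg (le_trans zero_le_one (le_max_left _ _)) _)
        intro i _
        exact Real.rpow_le_rpow (le_trans zero_le_one (le_max_left _ _))
          (max_le_max le_rfl (hcoord i)) (mul_nonneg hcpos.le (hθpos i).le)
      rcases le_total ‖ζ‖ 1 with h | h
      · rw [max_eq_left h, Real.one_rpow] at h1
        have := Real.rpow_nonneg (norm_nonneg ζ) c
        linarith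
      · rw [max_eq_right h] at h1
        linarith
    have key : f ζ ≤ (∏ i, |ζ i| ^ (1 - 2 * H i)) / D := by
      rw [hf]
      exact div_le_div₀ (hnum_nonneg ζ) le_rfl hDpos hDle
    refine le_trans key (le_of_eq ?_)
    rw [div_eq_mul_inv, hD, ← Finset.prod_inv_distrib, ← Finset.prod_mul_distrib]
    apply Finset.prod_congr rfl
    intro i _
    simp only [hφ']
    rw [Real.rpow_neg (le_trans zero_le_one (le_max_left (1:ℝ) |ζ i|))]
end

section
/- Let d ∈ {2,3} and H = (H₁,…,H_d) with 1/2 < H_i < 1 for every i and ∑_{i=1}^d H_i > d − 1, and set κ̄ = ∑_{i=1}^d H_i − (d − 1) > 0. Then J_H := ∫_{ℝ^d} (sin(|η|)/|η|)² · ∏_{i=1}^d |η_i|^{1−2H_i} dη < ∞, and for every t > 0: ∫_{ℝ^d} (sin(t|ζ|)/|ζ|)² · ∏_{i=1}^d |ζ_i|^{1−2H_i} dζ = t^{2κ̄} · J_H. In particular, for every T > 0 there is a constant C > 0 with ∫_{ℝ^d} (sin(t|ζ|)/|ζ|)² ∏_{i=1}^d |ζ_i|^{1−2H_i} dζ ≤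 C t^{2κ̄} for all t ∈ (0,T]. -/
open MeasureTheory

open Set in
private lemma aux_measurable_rpow_const (c : ℝ) : Measurable fun x : ℝ => x ^ c :=
  measurable_of_continuousOn_compl_singleton 0 fun x hx =>
    (Real.continuousAt_rpow_const x c (Or.inl hx)).continuousWithinAt

open Set in
private lemma aux_integrable_min_rpow {a b : ℝ} (ha : -1 < a) (hb : b < -1) :
    Integrable (fun x : ℝ => min (|x| ^ a) (|x| ^ b)) := by
  have hmeas : Measurable fun x : ℝ => min (|x| ^ a) (|x| ^ b) :=
    ((aux_measurable_rpow_const a).comp measurable_abs).min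
      ((aux_measurable_rpow_const b).comp measurable_abs)
  have hnn : ∀ x : ℝ, 0 ≤ min (|x| ^ a) (|x| ^ b) := fun x =>
    le_min (Real.rpow_nonneg (abs_nonneg x) a) (Real.rpow_nonneg (abs_nonneg x) b)
  have h1 : IntegrableOn (fun x : ℝ => min (|x| ^ a) (|x| ^ b)) (Ioi 0) := by
    have hIoc : IntegrableOn (fun x : ℝ => min (|x| ^ a) (|x| ^ b)) (Ioc 0 1) := by
      have hdom : IntegrableOn (fun x : ℝ => x ^ a) (Ioc 0 1) :=
        (intervalIntegrable_iff_integrableOn_Ioc_of_le zero_le_one).1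
          (intervalIntegral.intervalIntegrable_rpow' ha)
      refine hdom.mono' hmeas.aestronglyMeasurable.restrict ?_
      filter_upwards [ae_restrict_mem measurableSet_Ioc] with x hx
      rw [Real.norm_of_nonneg (hnn x)]
      calc min (|x| ^ a) (|x| ^ b) ≤ |x| ^ a := min_le_left _ _
        _ = x ^ a := by rw [abs_of_pos hx.1]
    have hIoi : IntegrableOn (fun x : ℝ => min (|x| ^ a) (|x| ^ b)) (Ioi 1) := by
      have hdom : IntegrableOn (fun x : ℝ => x ^ b) (Ioi 1) :=
        integrableOn_Ioi_rpow_of_lt hb one_pos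
      refine hdom.mono' hmeas.aestronglyMeasurable.restrict ?_
      filter_upwards [ae_restrict_mem measurableSet_Ioi] with x hx
      rw [Real.norm_of_nonneg (hnn x)]
      calc min (|x| ^ a) (|x| ^ b) ≤ |x| ^ b := min_le_right _ _
        _ = x ^ b := by rw [abs_of_pos (lt_trans one_pos hx)]
    rw [← Ioc_union_Ioi_eq_Ioi (zero_le_one (α := ℝ))]
    exact hIoc.union hIoi
  have h2 : IntegrableOn (fun x : ℝ => min (|x| ^ a) (|x| ^ b)) (Iic 0) := by
    have m : MeasurableEmbedding fun x : ℝ => -x := (Homeomorph.neg ℝ).measurableEmbedding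
    rw [← Measure.map_neg_eq_self (volume : Measure ℝ), m.integrableOn_map_iff]
    simp only [Function.comp_def, abs_neg, neg_preimage, neg_Iic, neg_zero]
    exact Iff.mpr integrableOn_Ici_iff_integrableOn_Ioi h1
  rw [← integrableOn_univ, ← Iic_union_Ioi (a := (0:ℝ))]
  exact h2.union h1

private lemma aux_meas (d : ℕ) (t : ℝ) (a : Fin d → ℝ) :
    Measurable (fun η : EuclideanSpace ℝ (Fin d) =>
      (Real.sin (t * ‖η‖) / ‖η‖) ^ 2 * ∏ i, |η i| ^ (a i)) :=
  (((Real.continuous_sin.measurable.comp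
      (measurable_const.mul measurable_norm)).div measurable_norm).pow_const 2).mul
    (Finset.measurable_prod _ fun i _ =>
      ((aux_measurable_rpow_const (a i)).comp ((measurable_pi_apply i).comp (WithLp.measurable_ofLp 2 (Fin d → ℝ))).abs))

private lemma aux_coord_le (d : ℕ) (η : EuclideanSpace ℝ (Fin d)) (i : Fin d) :
    |η i| ≤ ‖η‖ := by
  rw [EuclideanSpace.norm_eq]
  rw [Real.le_sqrt (abs_nonneg _) (Finset.sum_nonneg fun j _ => sq_nonneg ‖η j‖)]
  calc |η i| ^ 2 = ‖η i‖ ^ 2 := by rw [Real.norm_eq_abs]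
    _ ≤ ∑ j, ‖η j‖ ^ 2 := Finset.single_le_sum (fun j _ => sq_nonneg ‖η j‖) (Finset.mem_univ i)

private lemma aux_bound (d : ℕ) (hd : 0 < d) (H w : Fin d → ℝ)
    (hH : ∀ i, 1 / 2 < H i ∧ H i < 1)
    (hw : ∀ i, 0 ≤ w i) (hwsum : ∑ i, w i = 1) (η : EuclideanSpace ℝ (Fin d)) :
    (Real.sin ‖η‖ / ‖η‖) ^ 2 * ∏ i, |η i| ^ (1 - 2 * H i)
      ≤ ∏ i, min (|η i| ^ (1 - 2 * H i)) (|η i| ^ (1 - 2 * H i - 2 * w i)) := by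
  have hgnn : ∀ i, (0:ℝ) ≤ min (|η i| ^ (1 - 2 * H i)) (|η i| ^ (1 - 2 * H i - 2 * w i)) :=
    fun i => le_min (Real.rpow_nonneg (abs_nonneg _) _) (Real.rpow_nonneg (abs_nonneg _) _)
  by_cases hzero : ∃ i, η i = 0
  · obtain ⟨i0, hi0⟩ := hzero
    have : ∏ i, |η i| ^ (1 - 2 * H i) = 0 := by
      refine Finset.prod_eq_zero (Finset.mem_univ i0) ?_
      rw [hi0, abs_zero, Real.zero_rpow (by nlinarith [(hH i0).1])]
    rw [this, mul_zero]
    exact Finset.prod_nonneg fun i _ => hgnn i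
  · push_neg at hzero
    have hpos : ∀ i, 0 < |η i| := fun i => abs_pos.mpr (hzero i)
    have hηne : η ≠ 0 := by
      intro h
      exact hzero ⟨0, hd⟩ (by rw [h]; rfl)
    have hr : 0 < ‖η‖ := norm_pos_iff.mpr hηne
    set r := ‖η‖ with hrdef
    set m := min 1 (r ^ (-2:ℝ)) with hm
    have hmnn : 0 ≤ m := le_min zero_le_one (Real.rpow_nonneg hr.le _)
    have s1 : (Real.sin r / r) ^ 2 ≤ m := by
      refine le_min ?_ ?_
      · rw [div_pow, div_le_one (by positivity)]
        exact sq_le_sq' (by linarith [abs_le.1 (Real.abs_sin_le_abs (x := r)), abs_of_pos hr])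
          (by linarith [abs_le.1 (Real.abs_sin_le_abs (x := r)), abs_of_pos hr])
      · have : r ^ (-2:ℝ) = (r ^ 2)⁻¹ := by
          rw [Real.rpow_neg hr.le, show ((2:ℝ)) = ((2:ℕ):ℝ) by norm_num, Real.rpow_natCast]
        rw [this, div_pow, div_le_iff₀ (by positivity), inv_mul_cancel₀ (by positivity)]
        exact Real.sin_sq_le_one r
    have s2 : m ≤ ∏ i, min 1 (|η i| ^ (-(2 * w i))) := by
      have hmprod : m = ∏ i, m ^ w i := by
        rw [← Real.rpow_sum_of_nonneg hmnn (fun i _ => hw i), hwsum, Real.rpow_one]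
      rw [hmprod]
      refine Finset.prod_le_prod (fun i _ => Real.rpow_nonneg hmnn _) (fun i _ => ?_)
      refine le_min (Real.rpow_le_one hmnn (min_le_left _ _) (hw i)) ?_
      have h1 : m ≤ |η i| ^ (-2:ℝ) :=
        (min_le_right _ _).trans
          (Real.rpow_le_rpow_of_nonpos (hpos i) (aux_coord_le d η i) (by norm_num))
      calc m ^ w i ≤ (|η i| ^ (-2:ℝ)) ^ w i := Real.rpow_le_rpow hmnn h1 (hw i)
        _ = |η i| ^ (-(2 * w i)) := by
            rw [← Real.rpow_mul (abs_nonneg _)]; ring_nf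
    calc (Real.sin r / r) ^ 2 * ∏ i, |η i| ^ (1 - 2 * H i)
        ≤ (∏ i, min 1 (|η i| ^ (-(2 * w i)))) * ∏ i, |η i| ^ (1 - 2 * H i) :=
          mul_le_mul_of_nonneg_right (s1.trans s2)
            (Finset.prod_nonneg fun i _ => Real.rpow_nonneg (abs_nonneg _) _)
      _ = ∏ i, min 1 (|η i| ^ (-(2 * w i))) * |η i| ^ (1 - 2 * H i) :=
          (Finset.prod_mul_distrib).symm
      _ ≤ ∏ i, min (|η i| ^ (1 - 2 * H i)) (|η i| ^ (1 - 2 * H i - 2 * w i)) := by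
          refine le_of_eq (Finset.prod_congr rfl fun i _ => ?_)
          rw [min_mul_of_nonneg _ _ (Real.rpow_nonneg (abs_nonneg _) _), one_mul,
            ← Real.rpow_add (hpos i)]
          ring_nf

noncomputable def auxF (d : ℕ) (H : Fin d → ℝ) : EuclideanSpace ℝ (Fin d) → ℝ :=
  fun η => (Real.sin ‖η‖ / ‖η‖) ^ 2 * ∏ i, |η i| ^ (1 - 2 * H i)

private lemma aux_key (d : ℕ) (H : Fin d → ℝ) (t : ℝ) (ht : 0 < t)
    (ζ : EuclideanSpace ℝ (Fin d)) :
    (Real.sin (t * ‖ζ‖) / ‖ζ‖) ^ 2 * ∏ i, |ζ i| ^ (1 - 2 * H i)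
      = t ^ ((2:ℝ) - ∑ i, (1 - 2 * H i)) * auxF d H (t • ζ) := by
  unfold auxF
  by_cases hζ : ζ = 0
  · subst hζ
    simp [smul_zero]
  · have hr : 0 < ‖ζ‖ := norm_pos_iff.mpr hζ
    have hnorm : ‖t • ζ‖ = t * ‖ζ‖ := by
      rw [norm_smul, Real.norm_eq_abs, abs_of_pos ht]
    have hco : ∀ i : Fin d, |(t • ζ) i| = t * |ζ i| := fun i => by
      show |t * ζ i| = t * |ζ i|
      rw [abs_mul, abs_of_pos ht]
    have hprod : ∏ i, |(t • ζ) i| ^ (1 - 2 * H i)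
        = t ^ (∑ i, (1 - 2 * H i)) * ∏ i, |ζ i| ^ (1 - 2 * H i) := by
      rw [Real.rpow_sum_of_pos ht, ← Finset.prod_mul_distrib]
      exact Finset.prod_congr rfl fun i _ => by
        rw [hco i, Real.mul_rpow ht.le (abs_nonneg _)]
    rw [hnorm, hprod]
    have hsin : Real.sin (t * ‖ζ‖) / (t * ‖ζ‖) = Real.sin (t * ‖ζ‖) / ‖ζ‖ / t := by
      rw [div_div, mul_comm]
    rw [hsin]
    have expand : (Real.sin (t * ‖ζ‖) / ‖ζ‖ / t) ^ 2
        = Real.sin (t * ‖ζ‖) ^ 2 / (‖ζ‖ ^ 2 * t ^ 2) := by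
      rw [div_div, div_pow, mul_pow]
    rw [expand]
    have hXY : t ^ ((2:ℝ) - ∑ i, (1 - 2 * H i)) * t ^ (∑ i, (1 - 2 * H i)) = t ^ (2:ℕ) := by
      rw [← Real.rpow_add ht, ← Real.rpow_natCast t 2]
      norm_num
    rw [show t ^ ((2:ℝ) - ∑ i, (1 - 2 * H i)) *
        (Real.sin (t * ‖ζ‖) ^ 2 / (‖ζ‖ ^ 2 * t ^ 2) *
          ((t ^ (∑ i, (1 - 2 * H i))) * ∏ i, |ζ i| ^ (1 - 2 * H i)))
        = (t ^ ((2:ℝ) - ∑ i, (1 - 2 * H i)) * t ^ (∑ i, (1 - 2 * H i))) *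
          (Real.sin (t * ‖ζ‖) ^ 2 * ∏ i, |ζ i| ^ (1 - 2 * H i)) / (‖ζ‖ ^ 2 * t ^ 2) from by
        ring, hXY]
    field_simp

/-- hypothesis (h3) for fractional kernels. For `d ∈ {2,3}`,
`1/2 < Hᵢ < 1` with `κ̄ = ∑ᵢ Hᵢ - (d-1) > 0`:
`J_H = ∫ (sin|η|/|η|)² ∏ᵢ |ηᵢ|^{1-2Hᵢ} dη < ∞`, the spectral integral of the squared
wave Fourier transform scales as `t^{2κ̄}·J_H`, and in particular it is bounded by
`C·t^{2κ̄}` on every `(0,T]`. -/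
theorem stmt19 (d : ℕ) (hd : d = 2 ∨ d = 3) (H : Fin d → ℝ)
    (hH : ∀ i, 1 / 2 < H i ∧ H i < 1) (hsum : (d : ℝ) - 1 < ∑ i, H i) :
    Integrable (fun η : EuclideanSpace ℝ (Fin d) =>
        (Real.sin ‖η‖ / ‖η‖) ^ 2 * ∏ i, |η i| ^ (1 - 2 * H i))
      ∧ (∀ t : ℝ, 0 < t →
          (∫ ζ : EuclideanSpace ℝ (Fin d),
              (Real.sin (t * ‖ζ‖) / ‖ζ‖) ^ 2 * ∏ i, |ζ i| ^ (1 - 2 * H i))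
            = t ^ (2 * ((∑ i, H i) - ((d : ℝ) - 1)))
                * ∫ η : EuclideanSpace ℝ (Fin d),
                    (Real.sin ‖η‖ / ‖η‖) ^ 2 * ∏ i, |η i| ^ (1 - 2 * H i))
      ∧ ∀ T : ℝ, 0 < T → ∃ C > 0, ∀ t : ℝ, 0 < t → t ≤ T →
          (∫ ζ : EuclideanSpace ℝ (Fin d),
              (Real.sin (t * ‖ζ‖) / ‖ζ‖) ^ 2 * ∏ i, |ζ i| ^ (1 - 2 * H i))
            ≤ C * t ^ (2 * ((∑ i, H i) - ((d : ℝ) - 1))) := by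
  have hdpos : 0 < d := by rcases hd with h | h <;> omega
  have hdR : (0:ℝ) < d := by exact_mod_cast hdpos
  have hdne : (d:ℝ) ≠ 0 := ne_of_gt hdR
  set S := ∑ i, H i with hS
  set κ := S - ((d:ℝ) - 1) with hκdef
  have hκ : 0 < κ := by simp only [hκdef]; linarith
  set w : Fin d → ℝ := fun i => (1 - H i) + κ / d with hwdef
  have hw : ∀ i, 0 ≤ w i := fun i => by
    have := (hH i).2
    have : (0:ℝ) < κ / d := div_pos hκ hdR
    simp only [hwdef]
    nlinarith [(hH i).2]
  have hwsum : ∑ i, w i = 1 := by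
    simp only [hwdef]
    rw [Finset.sum_add_distrib, Finset.sum_sub_distrib]
    simp only [Finset.sum_const, Finset.card_univ, Fintype.card_fin, nsmul_eq_mul]
    have hc : (d:ℝ) * (κ / d) = κ := by field_simp
    rw [hc]
    simp only [hκdef, hS]
    ring
  -- integrability
  have hg : ∀ i : Fin d, Integrable
      (fun x : ℝ => min (|x| ^ (1 - 2 * H i)) (|x| ^ (1 - 2 * H i - 2 * w i))) := by
    intro i
    refine aux_integrable_min_rpow (by linarith [(hH i).2]) ?_
    have h1 : 1 - 2 * H i - 2 * w i = -1 - 2 * (κ / d) := by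
      simp only [hwdef]; ring
    have : (0:ℝ) < κ / d := div_pos hκ hdR
    rw [h1]; linarith
  have hΦ : Integrable (fun η : EuclideanSpace ℝ (Fin d) =>
      ∏ i, min (|η i| ^ (1 - 2 * H i)) (|η i| ^ (1 - 2 * H i - 2 * w i))) := by
    have hpi : Integrable (fun x : Fin d → ℝ =>
        ∏ i, min (|x i| ^ (1 - 2 * H i)) (|x i| ^ (1 - 2 * H i - 2 * w i))) :=
      Integrable.fintype_prod (𝕜 := ℝ) hg
    exact ((EuclideanSpace.volume_preserving_symm_measurableEquiv_toLp (Fin d)).integrable_comp_emb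
      (MeasurableEquiv.measurableEmbedding _)).mpr hpi
  have hfnn : ∀ (t : ℝ) (η : EuclideanSpace ℝ (Fin d)),
      0 ≤ (Real.sin (t * ‖η‖) / ‖η‖) ^ 2 * ∏ i, |η i| ^ (1 - 2 * H i) := fun t η =>
    mul_nonneg (sq_nonneg _) (Finset.prod_nonneg fun i _ => Real.rpow_nonneg (abs_nonneg _) _)
  have hInt : Integrable (fun η : EuclideanSpace ℝ (Fin d) =>
      (Real.sin ‖η‖ / ‖η‖) ^ 2 * ∏ i, |η i| ^ (1 - 2 * H i)) := by
    refine hΦ.mono' ?_ (Filter.Eventually.of_forall fun η => ?_)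
    · have := (aux_meas d 1 (fun i => 1 - 2 * H i)).aestronglyMeasurable
        (μ := (volume : Measure (EuclideanSpace ℝ (Fin d))))
      simpa only [one_mul] using this
    · rw [Real.norm_of_nonneg (by simpa only [one_mul] using hfnn 1 η)]
      exact aux_bound d hdpos H w hH hw hwsum η
  have hA : ∑ i, (1 - 2 * H i) = (d:ℝ) - 2 * S := by
    rw [Finset.sum_sub_distrib, ← Finset.mul_sum, Finset.sum_const, Finset.card_univ,
      Fintype.card_fin, nsmul_eq_mul, mul_one, ← hS]
  -- scaling identity
  have hscale : ∀ t : ℝ, 0 < t →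
      (∫ ζ : EuclideanSpace ℝ (Fin d),
          (Real.sin (t * ‖ζ‖) / ‖ζ‖) ^ 2 * ∏ i, |ζ i| ^ (1 - 2 * H i))
        = t ^ (2 * (S - ((d : ℝ) - 1)))
            * ∫ η : EuclideanSpace ℝ (Fin d),
                (Real.sin ‖η‖ / ‖η‖) ^ 2 * ∏ i, |η i| ^ (1 - 2 * H i) := by
    intro t ht
    simp_rw [aux_key d H t ht]
    rw [integral_const_mul, Measure.integral_comp_smul volume (auxF d H) t]
    rw [finrank_euclideanSpace_fin, smul_eq_mul, abs_of_pos (by positivity), ← mul_assoc]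
    have hpow : t ^ ((2:ℝ) - ∑ i, (1 - 2 * H i)) * (t ^ d)⁻¹
        = t ^ (2 * (S - ((d : ℝ) - 1))) := by
      rw [← Real.rpow_natCast t d, ← Real.rpow_neg ht.le, ← Real.rpow_add ht]
      congr 1
      rw [hA]
      ring
    rw [hpow]
    rfl
  refine ⟨hInt, hscale, ?_⟩
  intro T hT
  set J := ∫ η : EuclideanSpace ℝ (Fin d),
      (Real.sin ‖η‖ / ‖η‖) ^ 2 * ∏ i, |η i| ^ (1 - 2 * H i) with hJdef
  have hJnn : 0 ≤ J := integral_nonneg fun η => by have := hfnn 1 η; simp only [one_mul] at this; exact this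
  refine ⟨J + 1, by linarith, fun t ht htT => ?_⟩
  rw [hscale t ht, mul_comm]
  exact mul_le_mul_of_nonneg_right (by linarith) (Real.rpow_nonneg ht.le _)
end
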